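/- Let d > 1 be a squarefree integer such that exactly two rational primes ramify in K_d = ℚ(√d) (i.e. n_d = 2) and the class number h_d of K_d lies in {1,2}. If the smallest ramified prime p₁ satisfies p₁ ≡ 1 (mod 4), then h_d = 2. -/

import Mathlib

open NumberField Polynomial

/-- A rational `y` with `d * y ^ 2` an integer, `d` squarefree, is an integer. -/
lemma aux_rat_int_of_sf {d : ℕ} (hd : Squarefree d) {y : ℚ} {k : ℤ} (h : (d:ℚ) * y^2 = k) :
    ∃ v : ℤ, y = (v:ℚ) := by
  have hd0 : (d:ℚ) ≠ 0 := by exact_mod_cast hd.ne_zero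
  have hy2 : y^2 = (k:ℚ) / ((d:ℤ):ℚ) := by push_cast; field_simp; linarith [h]
  have hy2' : y^2 = Rat.divInt k (d:ℤ) := by rw [hy2, Rat.divInt_eq_div]
  have hden : ((y^2).den : ℤ) ∣ (d:ℤ) := by rw [hy2']; exact Rat.den_dvd k (d:ℤ)
  have hden2 : y.den * y.den ∣ d := by
    have := Int.ofNat_dvd.mp hden
    rwa [Rat.den_pow, pow_two] at this
  have h1 : y.den = 1 := Nat.isUnit_iff.mp (hd y.den hden2)
  refine ⟨y.num, ?_⟩
  conv_lhs => rw [← Rat.num_div_den y]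
  rw [h1]; simp

section Quad

variable {K : Type*} [Field K] [NumberField K]

/-- Norm and trace formulas plus representability in ℚ(√d). -/
lemma aux_quad (d : ℕ) (hd1 : 1 < d) (hdsf : Squarefree d) (α : K) (hα : α ^ 2 = (d:K))
    (hdeg : Module.finrank ℚ K = 2) :
    (∀ z : K, ∃ x y : ℚ, z = (x:K) + (y:K) * α) ∧
    (∀ x y : ℚ, Algebra.norm ℚ ((x:K) + (y:K) * α) = x ^ 2 - d * y ^ 2) ∧
    (∀ x y : ℚ, Algebra.trace ℚ K ((x:K) + (y:K) * α) = 2 * x) := by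
  -- α is not rational
  have hirr : ∀ c : ℚ, (c:K) ≠ α := by
    intro c hc
    have h3 : c^2 = ((d:ℤ):ℚ) := by
      have h2 : ((c^2 : ℚ) : K) = (((d:ℤ):ℚ) : K) := by push_cast; rw [hc, hα]
      exact_mod_cast h2
    have hden : c.den = 1 := by
      have hh := congrArg Rat.den h3
      rw [Rat.den_pow] at hh
      simp only [Rat.den_intCast] at hh
      have hh' : c.den * c.den = 1 := by rw [← pow_two]; exact hh
      exact Nat.eq_one_of_mul_eq_one_right (by rw [Nat.mul_comm]; exact hh')
    have hc' : (c.num : ℚ) = c := by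
      conv_rhs => rw [← Rat.num_div_den c]
      rw [hden]; simp
    have h4 : c.num^2 = (d:ℤ) := by rw [← hc'] at h3; exact_mod_cast h3
    have h5 : c.num.natAbs * c.num.natAbs = d := by
      have := congrArg Int.natAbs h4
      rwa [pow_two, Int.natAbs_mul, Int.natAbs_natCast] at this
    have h6 := Nat.isUnit_iff.mp (hdsf c.num.natAbs ⟨1, by rw [mul_one, h5]⟩)
    rw [h6] at h5
    omega
  have li : LinearIndependent ℚ ![(1:K), α] := by
    rw [LinearIndependent.pair_iff' (one_ne_zero)]
    intro a ha
    exact hirr a (by rw [← ha, Algebra.smul_def, mul_one]; rfl)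
  have hcard : Fintype.card (Fin 2) = Module.finrank ℚ K := by simp [hdeg]
  let B : Module.Basis (Fin 2) ℚ K := basisOfLinearIndependentOfCardEqFinrank li hcard
  have hB : ⇑B = ![(1:K), α] := coe_basisOfLinearIndependentOfCardEqFinrank li hcard
  have hB0 : B 0 = 1 := by rw [hB]; rfl
  have hB1 : B 1 = α := by rw [hB]; rfl
  have hrepr : ∀ x y : ℚ, ∀ i, B.repr ((x:K) + (y:K) * α) i = ![x, y] i := by
    intro x y i
    have hz : (x:K) + (y:K) * α = x • B 0 + y • B 1 := by
      rw [hB0, hB1, Algebra.smul_def, Algebra.smul_def, mul_one]; rfl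
    rw [hz, map_add, map_smul, map_smul, B.repr_self, B.repr_self]
    fin_cases i <;> simp
  have hrepr0 : ∀ x y : ℚ, B.repr ((x:K) + (y:K) * α) 0 = x := by
    intro x y; simpa using hrepr x y 0
  have hrepr1 : ∀ x y : ℚ, B.repr ((x:K) + (y:K) * α) 1 = y := by
    intro x y; simpa using hrepr x y 1
  have hmat : ∀ x y : ℚ, Algebra.leftMulMatrix B ((x:K) + (y:K) * α) = !![x, d*y; y, x] := by
    intro x y
    have e0 : ((x:K) + (y:K) * α) * (1:K) = (x:K) + (y:K) * α := mul_one _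
    have e1 : ((x:K) + (y:K) * α) * α = ((d*y : ℚ):K) + ((x:ℚ):K) * α := by
      push_cast
      calc ((x:K) + (y:K) * α) * α = (x:K) * α + (y:K) * α^2 := by ring
      _ = _ := by rw [hα]; push_cast; ring
    ext i j
    rw [Algebra.leftMulMatrix_eq_repr_mul]
    fin_cases i <;> fin_cases j
    · show B.repr (((x:K) + (y:K) * α) * B 0) 0 = x
      rw [hB0, e0, hrepr0]
    · show B.repr (((x:K) + (y:K) * α) * B 1) 0 = d * y
      rw [hB1, e1, hrepr0]
    · show B.repr (((x:K) + (y:K) * α) * B 0) 1 = y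
      rw [hB0, e0, hrepr1]
    · show B.repr (((x:K) + (y:K) * α) * B 1) 1 = x
      rw [hB1, e1, hrepr1]
  refine ⟨?_, ?_, ?_⟩
  · intro z
    refine ⟨B.repr z 0, B.repr z 1, ?_⟩
    have h := B.sum_repr z
    rw [Fin.sum_univ_two, hB0, hB1] at h
    conv_lhs => rw [← h]
    simp only [Algebra.smul_def, mul_one]
    rfl
  · intro x y
    rw [Algebra.norm_eq_matrix_det B, hmat, Matrix.det_fin_two_of]
    ring
  · intro x y
    rw [Algebra.trace_eq_matrix_trace B, hmat, Matrix.trace_fin_two_of]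
    ring

end Quad

/-- Main arithmetic step: choice of the auxiliary split prime `r`. -/
lemma aux_prime_r (p q : ℕ) (hp : p.Prime) (hq : q.Prime) (hpq : p ≠ q)
    (hp2 : p ≠ 2) (hq2 : q ≠ 2) :
    ∃ r : ℕ, r.Prime ∧ r % 4 = 1 ∧ r ≠ p ∧ r ≠ q ∧ r ≠ 2 ∧
      (∀ (_ : Fact p.Prime), legendreSym p r = -1) ∧
      (∀ (_ : Fact q.Prime), legendreSym q r = -1) := by
  haveI : Fact p.Prime := ⟨hp⟩
  haveI : Fact q.Prime := ⟨hq⟩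
  obtain ⟨np, hnp⟩ := FiniteField.exists_nonsquare (F := ZMod p)
    (by rw [ZMod.ringChar_zmod_n]; exact hp2)
  obtain ⟨nq, hnq⟩ := FiniteField.exists_nonsquare (F := ZMod q)
    (by rw [ZMod.ringChar_zmod_n]; exact hq2)
  have hnp0 : np ≠ 0 := fun h => hnp (h ▸ (by exact ⟨0, by simp⟩))
  have hnq0 : nq ≠ 0 := fun h => hnq (h ▸ (by exact ⟨0, by simp⟩))
  have copq : Nat.Coprime p q := (Nat.coprime_primes hp hq).mpr hpq
  obtain ⟨b, hbp, hbq⟩ := Nat.chineseRemainder copq np.val nq.val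
  have co2p : Nat.Coprime 2 p := (Nat.coprime_primes Nat.prime_two hp).mpr (Ne.symm hp2)
  have co2q : Nat.Coprime 2 q := (Nat.coprime_primes Nat.prime_two hq).mpr (Ne.symm hq2)
  have co4 : Nat.Coprime 4 (p * q) := by
    have : Nat.Coprime 2 (p * q) := Nat.Coprime.mul_right co2p co2q
    have h4 : (4:ℕ) = 2^2 := by norm_num
    rw [h4]
    exact Nat.Coprime.pow_left 2 this
  obtain ⟨a, ha4, hapq⟩ := Nat.chineseRemainder co4 1 b
  -- a is coprime to 4 * (p*q)
  have hap : ¬ p ∣ a := by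
    intro hdvd
    have h1 : a ≡ np.val [MOD p] :=
      (Nat.ModEq.of_dvd ⟨q, rfl⟩ hapq).trans hbp
    have h2 : (a : ZMod p) = np := by
      rw [(ZMod.natCast_eq_natCast_iff _ _ _).mpr h1, ZMod.natCast_zmod_val]
    rw [(ZMod.natCast_eq_zero_iff a p).mpr hdvd] at h2
    exact hnp0 h2.symm
  have haq : ¬ q ∣ a := by
    intro hdvd
    have h1 : a ≡ nq.val [MOD q] :=
      (Nat.ModEq.of_dvd ⟨p, mul_comm p q⟩ hapq).trans hbq
    have h2 : (a : ZMod q) = nq := by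
      rw [(ZMod.natCast_eq_natCast_iff _ _ _).mpr h1, ZMod.natCast_zmod_val]
    rw [(ZMod.natCast_eq_zero_iff a q).mpr hdvd] at h2
    exact hnq0 h2.symm
  have ha4' : a % 4 = 1 := by
    have h : a % 4 = 1 % 4 := ha4
    omega
  have hcop : Nat.Coprime a (4 * (p * q)) := by
    refine Nat.Coprime.mul_right ?_ (Nat.Coprime.mul_right ?_ ?_)
    · have : Nat.gcd 4 a = Nat.gcd (a % 4) 4 := by rw [Nat.gcd_rec, Nat.gcd_comm]
      have h2 : Nat.gcd 4 a = 1 := by rw [this, ha4']; norm_num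
      exact Nat.Coprime.symm h2
    · exact (Nat.coprime_comm.mp ((Nat.Prime.coprime_iff_not_dvd hp).mpr hap))
    · exact (Nat.coprime_comm.mp ((Nat.Prime.coprime_iff_not_dvd hq).mpr haq))
  haveI : NeZero (4 * (p * q)) := ⟨by
    have := hp.pos; have := hq.pos; positivity⟩
  obtain ⟨r, _, hrP, hrmod⟩ := Nat.forall_exists_prime_gt_and_eq_mod
    (q := 4 * (p * q)) (a := (a : ZMod (4 * (p * q))))
    (by rw [ZMod.isUnit_iff_coprime]; exact hcop) 1
  have hram : r ≡ a [MOD 4 * (p * q)] := (ZMod.natCast_eq_natCast_iff _ _ _).mp hrmod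
  have hr4 : r % 4 = 1 := by
    have h1 : r ≡ a [MOD 4] := Nat.ModEq.of_dvd ⟨p * q, rfl⟩ hram
    have h2 : r % 4 = a % 4 := h1
    omega
  have hrp : (r : ZMod p) = np := by
    have h1 : r ≡ np.val [MOD p] := by
      refine Nat.ModEq.trans (Nat.ModEq.of_dvd ⟨4 * q, by ring⟩ hram) ?_
      exact (Nat.ModEq.of_dvd ⟨q, rfl⟩ hapq).trans hbp
    rw [(ZMod.natCast_eq_natCast_iff _ _ _).mpr h1, ZMod.natCast_zmod_val]
  have hrq : (r : ZMod q) = nq := by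
    have h1 : r ≡ nq.val [MOD q] := by
      refine Nat.ModEq.trans (Nat.ModEq.of_dvd ⟨4 * p, by ring⟩ hram) ?_
      exact (Nat.ModEq.of_dvd ⟨p, mul_comm p q⟩ hapq).trans hbq
    rw [(ZMod.natCast_eq_natCast_iff _ _ _).mpr h1, ZMod.natCast_zmod_val]
  have hrnp : r ≠ p := by
    intro h; subst h
    rw [ZMod.natCast_self] at hrp
    exact hnp0 hrp.symm
  have hrnq : r ≠ q := by
    intro h; subst h
    rw [ZMod.natCast_self] at hrq
    exact hnq0 hrq.symm
  have hr2 : r ≠ 2 := by intro h; subst h; omega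
  refine ⟨r, hrP, hr4, hrnp, hrnq, hr2, fun _ => ?_, fun _ => ?_⟩
  · exact (legendreSym.eq_neg_one_iff' p).mpr (by rw [hrp]; exact hnp)
  · exact (legendreSym.eq_neg_one_iff' q).mpr (by rw [hrq]; exact hnq)

set_option synthInstance.maxHeartbeats 400000 in
set_option maxHeartbeats 1000000 in
lemma aux_key (d : ℕ) (hd1 : 1 < d) (hdsf : Squarefree d)
    (K : Type*) [Field K] [NumberField K] (α : K) (hα : α ^ 2 = (d:K))
    (hdeg : Module.finrank ℚ K = 2)
    (p q : ℕ) (hp : p.Prime) (hq : q.Prime) (hpq : p ≠ q) (hd : d = p * q)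
    (hp4 : p % 4 = 1) (hq2 : q ≠ 2)
    (hPID : IsPrincipalIdealRing (𝓞 K)) : False := by
  haveI : Fact p.Prime := ⟨hp⟩
  haveI : Fact q.Prime := ⟨hq⟩
  have hp2 : p ≠ 2 := by rintro rfl; norm_num at hp4
  obtain ⟨r, hrP, hr4, hrnp, hrnq, hr2, hLp', hLq'⟩ := aux_prime_r p q hp hq hpq hp2 hq2
  haveI : Fact r.Prime := ⟨hrP⟩
  have hLp : legendreSym p r = -1 := hLp' ⟨hp⟩
  have hLq : legendreSym q r = -1 := hLq' ⟨hq⟩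
  -- reciprocity
  have hLrp : legendreSym r p = -1 := by
    rw [← legendreSym.quadratic_reciprocity_one_mod_four hr4 hp2]; exact hLp
  have hLrq : legendreSym r q = -1 := by
    rw [← legendreSym.quadratic_reciprocity_one_mod_four hr4 hq2]; exact hLq
  have hrp_ne : ((p : ℤ) : ZMod r) ≠ 0 := by
    intro h
    have := (legendreSym.eq_zero_iff r (p:ℤ)).mpr h
    rw [hLrp] at this; norm_num at this
  have hrq_ne : ((q : ℤ) : ZMod r) ≠ 0 := by
    intro h
    have := (legendreSym.eq_zero_iff r (q:ℤ)).mpr h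
    rw [hLrq] at this; norm_num at this
  have hd0 : ((d : ℤ) : ZMod r) ≠ 0 := by
    rw [hd]; push_cast
    push_cast at hrp_ne hrq_ne
    exact mul_ne_zero hrp_ne hrq_ne
  -- d is a square mod r
  have hLrd : legendreSym r ((d : ℤ)) = 1 := by
    rw [hd]
    have e : ((p * q : ℕ) : ℤ) = (p:ℤ) * (q:ℤ) := by push_cast; ring
    rw [e, legendreSym.mul, hLrp, hLrq]; norm_num
  have hdsq : IsSquare ((d : ℤ) : ZMod r) := (legendreSym.eq_one_iff r hd0).mp hLrd
  obtain ⟨c, hc⟩ := hdsq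
  -- pick s with r ∣ s² - d , r² ∤ s² - d
  have hrd' : ¬ (r:ℤ) ∣ (d:ℤ) := fun h => hd0 ((ZMod.intCast_zmod_eq_zero_iff_dvd _ _).mpr h)
  have hrZ : Prime (r : ℤ) := Nat.prime_iff_prime_int.mp hrP
  have hr2Z : ¬ (r:ℤ) ∣ 2 := by
    intro h
    have h2' : r ∣ 2 := by exact_mod_cast h
    have := (Nat.prime_dvd_prime_iff_eq hrP Nat.prime_two).mp h2'
    exact hr2 this
  obtain ⟨s, hs1, hs2, hrs⟩ :
      ∃ s : ℤ, (r:ℤ) ∣ s^2 - d ∧ ¬ ((r:ℤ)^2 ∣ s^2 - d) ∧ ¬ (r:ℤ) ∣ s := by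
    set s0 : ℤ := (c.val : ℤ) with hs0def
    have hs0cast : ((s0 : ℤ) : ZMod r) = c := by
      rw [hs0def]; push_cast; exact ZMod.natCast_zmod_val c
    have hs0 : (r:ℤ) ∣ s0^2 - d := by
      apply (ZMod.intCast_zmod_eq_zero_iff_dvd _ _).mp
      push_cast
      rw [show ((s0:ℤ) : ZMod r) ^ 2 = c^2 by rw [hs0cast]]
      rw [pow_two, ← hc]
      push_cast
      ring
    have hrs0 : ¬ (r:ℤ) ∣ s0 := by
      intro h
      apply hrd'
      have h2x := h
      have h2 : (r:ℤ) ∣ s0^2 := by rw [pow_two]; exact Dvd.dvd.mul_left h s0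
      have : (r:ℤ) ∣ (d:ℤ) := by
        have e : (d:ℤ) = s0^2 - (s0^2 - d) := by ring
        rw [e]; exact dvd_sub h2 hs0
      exact this
    by_cases h2 : (r:ℤ)^2 ∣ s0^2 - d
    · refine ⟨s0 + r, ?_, ?_, ?_⟩
      · have e : (s0+r)^2 - d = (s0^2 - d) + r*(2*s0+r) := by ring
        rw [e]; exact dvd_add hs0 ⟨2*s0+r, rfl⟩
      · intro hcon
        have h3 : (r:ℤ)^2 ∣ (r:ℤ)*(2*s0+r) := by
          have e : (r:ℤ)*(2*s0+r) = ((s0+r)^2 - d) - (s0^2 - d) := by ring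
          rw [e]; exact dvd_sub hcon h2
        have h4 : (r:ℤ) ∣ 2*s0 + r := by
          obtain ⟨k, hk⟩ := h3
          have hr0 : (r:ℤ) ≠ 0 := by exact_mod_cast hrP.ne_zero
          refine ⟨k, ?_⟩
          have : (r:ℤ) * (2*s0+r) = (r:ℤ) * ((r:ℤ)*k) := by rw [hk]; ring
          exact mul_left_cancel₀ hr0 this
        have h5 : (r:ℤ) ∣ 2*s0 := by
          have : (2*s0 : ℤ) = (2*s0+r) - r := by ring
          rw [this]; exact dvd_sub h4 dvd_rfl
        rcases hrZ.dvd_mul.mp h5 with h | h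
        · exact hr2Z h
        · exact hrs0 h
      · intro h
        have : (r:ℤ) ∣ s0 := by
          have e : s0 = (s0 + r) - r := by ring
          rw [e]; exact dvd_sub h dvd_rfl
        exact hrs0 this
    · exact ⟨s0, hs0, h2, hrs0⟩
  -- the algebraic part
  obtain ⟨hrep, hnormf, htracef⟩ := aux_quad d hd1 hdsf α hα hdeg
  have hαint : IsIntegral ℤ α := by
    refine ⟨X^2 - C (d:ℤ), monic_X_pow_sub_C _ (by norm_num), ?_⟩
    simp only [eval₂_sub, eval₂_X_pow, eval₂_C, hα]
    push_cast
    ring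
  set A : 𝓞 K := ⟨α, hαint⟩ with hAdef
  have hAK : (algebraMap (𝓞 K) K) A = α := rfl
  set rO : 𝓞 K := ((r : ℤ) : 𝓞 K) with hrOdef
  set sO : 𝓞 K := ((s : ℤ) : 𝓞 K) with hsOdef
  -- norm computations
  have hcoe_nat : ∀ n : ℤ, (algebraMap (𝓞 K) K) ((n : ℤ) : 𝓞 K) = ((n:ℚ):K) := by
    intro n
    rw [map_intCast]
    push_cast
    rfl
  have normAplus : Algebra.norm ℤ (A + sO) = s^2 - d := by
    have h1 : ((Algebra.norm ℤ (A + sO) : ℤ) : ℚ) = ((s^2 - d : ℤ) : ℚ) := by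
      rw [Algebra.coe_norm_int]
      have e : ((A + sO : 𝓞 K) : K) = ((s:ℚ):K) + ((1:ℚ):K) * α := by
        rw [RingOfIntegers.coe_eq_algebraMap, map_add, hAK, hcoe_nat]
        push_cast
        ring
      rw [e, hnormf]
      push_cast
      ring
    exact_mod_cast h1
  have normAminus : Algebra.norm ℤ (A - sO) = s^2 - d := by
    have h1 : ((Algebra.norm ℤ (A - sO) : ℤ) : ℚ) = ((s^2 - d : ℤ) : ℚ) := by
      rw [Algebra.coe_norm_int]
      have e : ((A - sO : 𝓞 K) : K) = (((-s : ℤ):ℚ):K) + ((1:ℚ):K) * α := by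
        rw [RingOfIntegers.coe_eq_algebraMap, map_sub, hAK, hcoe_nat]
        push_cast
        ring
      rw [e, hnormf]
      push_cast
      ring
    exact_mod_cast h1
  have normR : Algebra.norm ℤ rO = (r:ℤ)^2 := by
    have h1 : ((Algebra.norm ℤ rO : ℤ) : ℚ) = (((r:ℤ)^2 : ℤ) : ℚ) := by
      rw [Algebra.coe_norm_int]
      have e : ((rO : 𝓞 K) : K) = (((r:ℤ):ℚ):K) + ((0:ℚ):K) * α := by
        rw [RingOfIntegers.coe_eq_algebraMap, hcoe_nat]
        push_cast
        ring
      rw [e, hnormf]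
      push_cast
      ring
    exact_mod_cast h1
  -- the ideals
  set I : Ideal (𝓞 K) := Ideal.span {rO, A - sO} with hIdef
  set J : Ideal (𝓞 K) := Ideal.span {rO, A + sO} with hJdef
  obtain ⟨m, hm⟩ := hs1
  have hAfac : (A - sO) * (A + sO) = rO * ((-m : ℤ) : 𝓞 K) := by
    apply RingOfIntegers.ext
    rw [RingOfIntegers.coe_eq_algebraMap, RingOfIntegers.coe_eq_algebraMap,
      map_mul, map_mul, map_sub, map_add, hAK, hcoe_nat, hcoe_nat, hcoe_nat]
    push_cast
    have hmK : ((s : K))^2 - ((d:ℕ) : K) = ((r:ℕ) : K) * ((m : K)) := by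
      exact_mod_cast congrArg (fun t : ℤ => ((t : K))) hm
    linear_combination hα - hmK
  have hIJ : I * J = Ideal.span {rO} := by
    apply le_antisymm
    · rw [hIdef, hJdef, Ideal.span_mul_span', Ideal.span_le]
      rintro x hx
      rw [Set.mem_mul] at hx
      obtain ⟨u, hu, v, hv, rfl⟩ := hx
      rw [SetLike.mem_coe, Ideal.mem_span_singleton]
      rcases Set.mem_insert_iff.mp hu with rfl | hu
      · exact Dvd.dvd.mul_right dvd_rfl v
      · rcases Set.mem_insert_iff.mp hv with rfl | hv
        · rw [Set.mem_singleton_iff] at hu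
          subst hu
          exact Dvd.dvd.mul_left dvd_rfl _
        · rw [Set.mem_singleton_iff] at hu hv
          subst hu; subst hv
          exact ⟨((-m : ℤ) : 𝓞 K), hAfac⟩
    · rw [Ideal.span_le, Set.singleton_subset_iff]
      have hmemI1 : rO ∈ I := Ideal.subset_span (Set.mem_insert _ _)
      have hmemI2 : A - sO ∈ I := Ideal.subset_span (Set.mem_insert_of_mem _ rfl)
      have hmemJ1 : rO ∈ J := Ideal.subset_span (Set.mem_insert _ _)
      have hmemJ2 : A + sO ∈ J := Ideal.subset_span (Set.mem_insert_of_mem _ rfl)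
      have h1 : rO * (A + sO) ∈ I * J := Ideal.mul_mem_mul hmemI1 hmemJ2
      have h2 : (A - sO) * rO ∈ I * J := Ideal.mul_mem_mul hmemI2 hmemJ1
      have h3 : rO * rO ∈ I * J := Ideal.mul_mem_mul hmemI1 hmemJ1
      have h4 : ((2*s*r : ℤ) : 𝓞 K) ∈ I * J := by
        have e : ((2*s*r : ℤ) : 𝓞 K) = rO * (A + sO) - (A - sO) * rO := by
          rw [hrOdef, hsOdef]; push_cast; ring
        rw [e]; exact sub_mem h1 h2
      have h5 : ((r*r : ℤ) : 𝓞 K) ∈ I * J := by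
        have e : ((r*r : ℤ) : 𝓞 K) = rO * rO := by rw [hrOdef]; push_cast; ring
        rw [e]; exact h3
      -- Bezout
      have hndvd : ¬ (r:ℤ) ∣ 2*s := by
        intro h
        rcases hrZ.dvd_mul.mp h with h | h
        · exact hr2Z h
        · exact hrs h
      have hco : IsCoprime (r:ℤ) (2*s) := by
        rw [Int.isCoprime_iff_gcd_eq_one]
        rcases (Nat.coprime_or_dvd_of_prime hrP (2*s).natAbs) with h | h
        · unfold Int.gcd
          simpa using h
        · exact absurd (Int.dvd_natAbs.mp (Int.natCast_dvd_natCast.mpr h)) hndvd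
      obtain ⟨u, v, huv⟩ := hco
      have e2 : (r:ℤ) = u*(r*r) + v*(2*s*r) := by linear_combination (-(r:ℤ)) * huv
      have e3 : rO = ((u:ℤ) : 𝓞 K) * ((r*r : ℤ) : 𝓞 K) + ((v:ℤ) : 𝓞 K) * ((2*s*r : ℤ) : 𝓞 K) := by
        rw [hrOdef]
        exact_mod_cast congrArg (fun t : ℤ => (t : 𝓞 K)) e2
      rw [e3]
      exact add_mem (Ideal.mul_mem_left _ _ h5) (Ideal.mul_mem_left _ _ h4)
  -- the two ideals are proper
  have hrO_dvd_imp : ∀ z : 𝓞 K, Algebra.norm ℤ z = s^2 - d → rO ∣ z → False := by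
    intro z hz hdvd
    obtain ⟨c', hc'⟩ := hdvd
    apply hs2
    have hnormmul := congrArg (Algebra.norm ℤ) hc'
    rw [map_mul, normR, hz] at hnormmul
    exact ⟨Algebra.norm ℤ c', hnormmul⟩
  have hnI : I ≠ ⊤ := by
    intro htop
    have hJeq : J = Ideal.span {rO} := by rw [← hIJ, htop, Ideal.top_mul]
    have hmem : A + sO ∈ Ideal.span {rO} := by
      rw [← hJeq]; exact Ideal.subset_span (Set.mem_insert_of_mem _ rfl)
    exact hrO_dvd_imp _ normAplus (Ideal.mem_span_singleton.mp hmem)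
  have hnJ : J ≠ ⊤ := by
    intro htop
    have hIeq : I = Ideal.span {rO} := by rw [← hIJ, htop, Ideal.mul_top]
    have hmem : A - sO ∈ Ideal.span {rO} := by
      rw [← hIeq]; exact Ideal.subset_span (Set.mem_insert_of_mem _ rfl)
    exact hrO_dvd_imp _ normAminus (Ideal.mem_span_singleton.mp hmem)
  -- absolute norms
  have habs : Ideal.absNorm I * Ideal.absNorm J = r^2 := by
    rw [← _root_.map_mul, hIJ, Ideal.absNorm_span_singleton, normR]
    rw [pow_two, Int.natAbs_mul]
    simp [pow_two]
  have hInot1 : Ideal.absNorm I ≠ 1 := fun h => hnI (Ideal.absNorm_eq_one_iff.mp h)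
  have hJnot1 : Ideal.absNorm J ≠ 1 := fun h => hnJ (Ideal.absNorm_eq_one_iff.mp h)
  have hIr : Ideal.absNorm I = r := ((hrP.mul_eq_prime_sq_iff hInot1 hJnot1).mp habs).1
  -- principality
  obtain ⟨β, hβ⟩ := (hPID.principal I).principal
  rw [hβ] at hIr
  rw [Ideal.submodule_span_eq, Ideal.absNorm_span_singleton] at hIr
  set n' : ℤ := Algebra.norm ℤ β with hn'def
  have hn : n' = r ∨ n' = -r := Int.natAbs_eq_iff.mp hIr
  -- coordinates
  obtain ⟨x, y, hxy⟩ := hrep ((algebraMap (𝓞 K) K) β)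
  have hnormβ : ((n' : ℤ) : ℚ) = x^2 - d*y^2 := by
    rw [hn'def, Algebra.coe_norm_int, RingOfIntegers.coe_eq_algebraMap, hxy, hnormf]
  have htr : Algebra.trace ℚ K ((algebraMap (𝓞 K) K) β) = 2*x := by rw [hxy]; exact htracef x y
  have hint : IsIntegral ℤ (Algebra.trace ℚ K ((algebraMap (𝓞 K) K) β)) :=
    Algebra.isIntegral_trace (RingOfIntegers.isIntegral_coe β)
  obtain ⟨u, hu⟩ := IsIntegrallyClosed.isIntegral_iff.mp hint
  have hu' : (u : ℚ) = 2*x := by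
    rw [← htr, ← hu]
    simp [algebraMap_int_eq]
  have hkey : (d:ℚ) * (2*y)^2 = ((u^2 - 4*n' : ℤ) : ℚ) := by
    push_cast
    linear_combination (-(u:ℚ) - 2*x) * hu' + 4 * hnormβ
  obtain ⟨v, hv⟩ := aux_rat_int_of_sf hdsf hkey
  have hfin : u^2 - d * v^2 = 4*n' := by
    have hQ : ((u^2 - d*v^2 : ℤ) : ℚ) = ((4*n' : ℤ) : ℚ) := by
      push_cast
      linear_combination ((u:ℚ) + 2*x) * hu' - 4*hnormβ + ((d:ℚ)*((v:ℚ) + 2*y)) * hv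
    exact_mod_cast hQ
  -- reduction mod p
  have hpr : ¬ (p:ℤ) ∣ (r:ℤ) := by
    intro h
    have h2 : ((r : ℤ) : ZMod p) = 0 := by
      apply (ZMod.intCast_zmod_eq_zero_iff_dvd _ _).mpr
      exact_mod_cast h
    have := (legendreSym.eq_zero_iff p (r:ℤ)).mpr h2
    rw [hLp] at this
    norm_num at this
  have hp4Z : ¬ (p:ℤ) ∣ 4 := by
    intro h
    have h2 : p ∣ 4 := by exact_mod_cast h
    have h4 : p ≤ 4 := Nat.le_of_dvd (by norm_num) h2
    have h5 := hp.two_le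
    interval_cases p <;> omega
  have h4n_ne : ((4*n' : ℤ) : ZMod p) ≠ 0 := by
    intro h0
    have hdvd : (p:ℤ) ∣ 4*n' := (ZMod.intCast_zmod_eq_zero_iff_dvd _ _).mp h0
    have hdvd' : (p:ℤ) ∣ 4*(r:ℤ) := by
      rcases hn with h | h
      · rw [h] at hdvd; exact hdvd
      · rw [h] at hdvd
        have : (4*(r:ℤ)) = -(4*(-(r:ℤ))) := by ring
        rw [this]
        exact (dvd_neg).mpr hdvd
    rcases (Nat.prime_iff_prime_int.mp hp).dvd_mul.mp hdvd' with h | h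
    · exact hp4Z h
    · exact hpr h
  have hsq : IsSquare ((4*n' : ℤ) : ZMod p) := by
    refine ⟨(u : ZMod p), ?_⟩
    have hcast := congrArg (fun t : ℤ => (t : ZMod p)) hfin
    push_cast at hcast
    have hd0p : ((d:ℕ) : ZMod p) = 0 := by
      rw [hd]; push_cast; rw [ZMod.natCast_self]; ring
    rw [hd0p] at hcast
    push_cast
    rw [← hcast]
    ring
  have L1 : legendreSym p (4*n') = 1 := (legendreSym.eq_one_iff p h4n_ne).mpr hsq
  have L4 : legendreSym p 4 = 1 := by
    apply (legendreSym.eq_one_iff p ?_).mpr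
    · exact ⟨2, by norm_num⟩
    · intro h
      exact hp4Z ((ZMod.intCast_zmod_eq_zero_iff_dvd _ _).mp h)
  have Lm1 : legendreSym p (-1) = 1 := by
    apply (legendreSym.eq_one_iff p ?_).mpr
    · have := ZMod.exists_sq_eq_neg_one_iff (p := p) |>.mpr (by omega)
      obtain ⟨w, hw⟩ := this
      exact ⟨w, by push_cast; rw [hw]⟩
    · simp only [Int.cast_neg, Int.cast_one, ne_eq, neg_eq_zero]
      exact one_ne_zero
  have Ln' : legendreSym p n' = -1 := by
    rcases hn with h | h
    · rw [h]; exact hLp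
    · rw [h, show (-(r:ℤ)) = (-1) * (r:ℤ) by ring, legendreSym.mul, Lm1, hLp]
      norm_num
  rw [legendreSym.mul, L4, Ln'] at L1
  norm_num at L1

/-- The discriminant of the real quadratic field `ℚ(√d)` for a squarefree integer `d > 1`. -/
def quadDisc (d : ℕ) : ℕ := if d % 4 = 1 then d else 4 * d

/-- Suppose exactly two rational primes ramify in `K_d = ℚ(√d)` (i.e. `n_d = 2`) and
`h_d ∈ {1, 2}`. If the smallest ramified prime `p₁` satisfies `p₁ ≡ 1 (mod 4)`,
then `h_d = 2`. -/
theorem stmt_6 (d : ℕ) (hd1 : 1 < d) (hdsf : Squarefree d)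
    (K : Type*) [Field K] [NumberField K] (α : K)
    (hα : α ^ 2 = (d : K)) (hdeg : Module.finrank ℚ K = 2)
    (hnd : (quadDisc d).primeFactors.card = 2)
    (hcl : classNumber K = 1 ∨ classNumber K = 2)
    (p₁ : ℕ) (hp₁ : p₁.Prime) (hp₁d : p₁ ∣ quadDisc d)
    (hmin : ∀ q : ℕ, q.Prime → q ∣ quadDisc d → p₁ ≤ q)
    (hp₁4 : p₁ % 4 = 1) :
    classNumber K = 2 := by
  rcases hcl with hcl1 | hcl2
  · exfalso
    have hPID : IsPrincipalIdealRing (𝓞 K) := NumberField.classNumber_eq_one_iff.mp hcl1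
    have hd4 : d % 4 = 1 := by
      by_contra h4
      have hqd : quadDisc d = 4 * d := by rw [quadDisc, if_neg h4]
      have h2d : 2 ∣ quadDisc d := by rw [hqd]; exact ⟨2*d, by ring⟩
      have hle := hmin 2 Nat.prime_two h2d
      have := hp₁.two_le
      omega
    have hquad : quadDisc d = d := by rw [quadDisc, if_pos hd4]
    rw [hquad] at hnd hp₁d
    obtain ⟨a, b, hab, hset⟩ := Finset.card_eq_two.mp hnd
    have hd0 : d ≠ 0 := by omega
    have hp₁mem : p₁ ∈ d.primeFactors := Nat.mem_primeFactors.mpr ⟨hp₁, hp₁d, hd0⟩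
    have hamem : a ∈ d.primeFactors := by rw [hset]; exact Finset.mem_insert_self _ _
    have hbmem : b ∈ d.primeFactors := by
      rw [hset]; exact Finset.mem_insert_of_mem (Finset.mem_singleton_self _)
    have haP : a.Prime := Nat.prime_of_mem_primeFactors hamem
    have hbP : b.Prime := Nat.prime_of_mem_primeFactors hbmem
    have hprod : a * b = d := by
      have := Nat.prod_primeFactors_of_squarefree hdsf
      rw [hset, Finset.prod_pair hab] at this
      exact this
    have hodd : d % 2 = 1 := by omega
    rw [hset] at hp₁mem
    rcases Finset.mem_insert.mp hp₁mem with rfl | hmem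
    · have hq2 : b ≠ 2 := by
        rintro rfl
        have : 2 ∣ d := by rw [← hprod]; exact ⟨p₁, by ring⟩
        omega
      exact aux_key d hd1 hdsf K α hα hdeg p₁ b hp₁ hbP hab hprod.symm hp₁4 hq2 hPID
    · rw [Finset.mem_singleton] at hmem
      subst hmem
      have hq2 : a ≠ 2 := by
        rintro rfl
        have : 2 ∣ d := by rw [← hprod]; exact ⟨p₁, by ring⟩
        omega
      exact aux_key d hd1 hdsf K α hα hdeg p₁ a hp₁ haP (Ne.symm hab)
        (by rw [← hprod]; ring) hp₁4 hq2 hPID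
  · exact hcl2
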